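/- The theta function identity θ₂(q²)² + θ₃(q²)² = θ₃(q)² holds, i.e., (∑_{n∈ℤ} q^{2n²})² + q·(∑_{n∈ℤ} q^{2n(n+1)})² = (∑_{n∈ℤ} q^{n²})². -/
import Mathlib

private lemma sq_bound (x : ℤ) (n : ℤ) (hn : 0 ≤ n) (h : x ^ 2 ≤ n) : -n ≤ x ∧ x ≤ n := by
  constructor
  · nlinarith [sq_nonneg (x + 1), sq_nonneg x]
  · nlinarith [sq_nonneg (x - 1), sq_nonneg x]

private lemma finA (p : ℕ) : Finite {x : ℤ × ℤ // 2 * x.1 ^ 2 + 2 * x.2 ^ 2 = (p : ℤ)} := by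
  have : {x : ℤ × ℤ | 2 * x.1 ^ 2 + 2 * x.2 ^ 2 = (p : ℤ)}.Finite := by
    apply Set.Finite.subset (Set.finite_Icc (-(p:ℤ), -(p:ℤ)) ((p:ℤ), (p:ℤ)))
    rintro ⟨x, y⟩ h
    simp only [Set.mem_setOf_eq] at h
    have hx := sq_bound x p (by positivity) (by nlinarith [sq_nonneg y])
    have hy := sq_bound y p (by positivity) (by nlinarith [sq_nonneg x])
    simp only [Set.mem_Icc, Prod.mk_le_mk]
    exact ⟨⟨hx.1, hy.1⟩, ⟨hx.2, hy.2⟩⟩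
  exact this.to_subtype

private lemma finB (p : ℕ) :
    Finite {x : ℤ × ℤ // 2 * x.1 * (x.1 + 1) + 2 * x.2 * (x.2 + 1) + 1 = (p : ℤ)} := by
  have : {x : ℤ × ℤ | 2 * x.1 * (x.1 + 1) + 2 * x.2 * (x.2 + 1) + 1 = (p : ℤ)}.Finite := by
    apply Set.Finite.subset (Set.finite_Icc (-(p:ℤ), -(p:ℤ)) ((p:ℤ), (p:ℤ)))
    rintro ⟨x, y⟩ h
    simp only [Set.mem_setOf_eq] at h
    have hx2 : x * (x + 1) ≥ 0 := by nlinarith [sq_nonneg (2*x+1)]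
    have hy2 : y * (y + 1) ≥ 0 := by nlinarith [sq_nonneg (2*y+1)]
    have hx := sq_bound x p (by positivity) (by nlinarith)
    have hy := sq_bound y p (by positivity) (by nlinarith)
    simp only [Set.mem_Icc, Prod.mk_le_mk]
    exact ⟨⟨hx.1, hy.1⟩, ⟨hx.2, hy.2⟩⟩
  exact this.to_subtype

private def thetaEquiv (p : ℕ) :
    ({x : ℤ × ℤ // 2 * x.1 ^ 2 + 2 * x.2 ^ 2 = (p : ℤ)} ⊕
      {x : ℤ × ℤ // 2 * x.1 * (x.1 + 1) + 2 * x.2 * (x.2 + 1) + 1 = (p : ℤ)}) ≃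
    {x : ℤ × ℤ // x.1 ^ 2 + x.2 ^ 2 = (p : ℤ)} where
  toFun := Sum.elim
    (fun a => ⟨(a.1.1 + a.1.2, a.1.1 - a.1.2), by have h := a.2; dsimp only; linear_combination h⟩)
    (fun a => ⟨(a.1.1 + a.1.2 + 1, a.1.1 - a.1.2), by
      have h := a.2; dsimp only; linear_combination h⟩)
  invFun c :=
    if hxy : (c.1.1 + c.1.2) % 2 = 0 then
      .inl ⟨((c.1.1 + c.1.2) / 2, (c.1.1 - c.1.2) / 2), by
        obtain ⟨⟨x, y⟩, h⟩ := c
        dsimp only at hxy h ⊢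
        obtain ⟨a, b, hx, hy, ha, hb⟩ :
            ∃ a b : ℤ, x = a + b ∧ y = a - b ∧ (x + y) / 2 = a ∧ (x - y) / 2 = b :=
          ⟨(x + y) / 2, (x - y) / 2, by omega, by omega, rfl, rfl⟩
        rw [ha, hb]
        linear_combination h - (x + a + b) * hx - (y + a - b) * hy⟩
    else
      .inr ⟨((c.1.1 + c.1.2 - 1) / 2, (c.1.1 - c.1.2 - 1) / 2), by
        obtain ⟨⟨x, y⟩, h⟩ := c
        dsimp only at hxy h ⊢
        obtain ⟨a, b, hx, hy, ha, hb⟩ :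
            ∃ a b : ℤ, x = a + b + 1 ∧ y = a - b ∧ (x + y - 1) / 2 = a ∧ (x - y - 1) / 2 = b :=
          ⟨(x + y - 1) / 2, (x - y - 1) / 2, by omega, by omega, rfl, rfl⟩
        rw [ha, hb]
        linear_combination h - (x + a + b + 1) * hx - (y + a - b) * hy⟩
  left_inv := by
    rintro (⟨⟨u, v⟩, h⟩ | ⟨⟨u, v⟩, h⟩)
    · dsimp only [Sum.elim_inl]
      rw [dif_pos (by omega : (u + v + (u - v)) % 2 = 0)]
      refine congrArg Sum.inl (Subtype.ext ?_)
      simp only [Prod.mk.injEq]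
      omega
    · dsimp only [Sum.elim_inr]
      rw [dif_neg (by omega : ¬ (u + v + 1 + (u - v)) % 2 = 0)]
      refine congrArg Sum.inr (Subtype.ext ?_)
      simp only [Prod.mk.injEq]
      omega
  right_inv := by
    rintro ⟨⟨x, y⟩, h⟩
    dsimp only
    by_cases hxy : (x + y) % 2 = 0
    · rw [dif_pos hxy]
      dsimp only [Sum.elim_inl]
      refine Subtype.ext ?_
      simp only [Prod.mk.injEq]
      omega
    · rw [dif_neg hxy]
      dsimp only [Sum.elim_inr]
      refine Subtype.ext ?_
      simp only [Prod.mk.injEq]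
      omega

theorem theta_identity (p : ℕ) :
    Nat.card {x : ℤ × ℤ // 2 * x.1 ^ 2 + 2 * x.2 ^ 2 = (p : ℤ)} +
      Nat.card {x : ℤ × ℤ // 2 * x.1 * (x.1 + 1) + 2 * x.2 * (x.2 + 1) + 1 = (p : ℤ)}
    = Nat.card {x : ℤ × ℤ // x.1 ^ 2 + x.2 ^ 2 = (p : ℤ)} := by
  have := finA p
  have := finB p
  rw [← Nat.card_sum, Nat.card_congr (thetaEquiv p)]
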